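/- With T ⊆ A⊗B⊗C the 6-dimensional subspace spanned by all basis tensors a_i⊗b_j⊗c_k except a_0⊗b_1⊗c_0 and a_1⊗b_0⊗c_1 (dim A = dim B = dim C = 2), the set of decomposable (rank ≤ 1) tensors contained in T is the union of six 2-dimensional linear subspaces L_0,…,L_5, where consecutive spaces L_i, L_{i+1 mod 6} intersect in a line and non-consecutive ones intersect only in 0. -/
import Mathlib


noncomputable section

/-- the space `A ⊗ B ⊗ C` with `A = B = C = ℂ²`, in coordinates. -/
abbrev T222 := Fin 2 × Fin 2 × Fin 2 → ℂ

/-- the basis tensor `a_i ⊗ b_j ⊗ c_k`. -/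
def E (q : Fin 2 × Fin 2 × Fin 2) : T222 := Pi.single q 1

/-- `t` is a decomposable (rank `≤ 1`) tensor `u ⊗ v ⊗ w`. -/
def IsRankOne (t : T222) : Prop :=
  ∃ u v w : Fin 2 → ℂ, t = fun p => u p.1 * v p.2.1 * w p.2.2

/-- the 6-dimensional subspace `T` spanned by all basis tensors except
`a₀⊗b₁⊗c₀` and `a₁⊗b₀⊗c₁`. -/
def T : Submodule ℂ T222 :=
  Submodule.span ℂ (E '' {q | q ≠ (0, 1, 0) ∧ q ≠ (1, 0, 1)})

/-- the six 2-dimensional subspaces `L₀,…,L₅` (the cones over the six lines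
`r₀,…,r₅`), in cyclic order. -/
def L : Fin 6 → Submodule ℂ T222 :=
  ![Submodule.span ℂ {E (0, 1, 1), E (1, 1, 1)},
    Submodule.span ℂ {E (0, 0, 1), E (0, 1, 1)},
    Submodule.span ℂ {E (0, 0, 0), E (0, 0, 1)},
    Submodule.span ℂ {E (0, 0, 0), E (1, 0, 0)},
    Submodule.span ℂ {E (1, 0, 0), E (1, 1, 0)},
    Submodule.span ℂ {E (1, 1, 0), E (1, 1, 1)}]

lemma E_apply (q p : Fin 2 × Fin 2 × Fin 2) : E q p = if p = q then 1 else 0 := by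
  simp [E, Pi.single_apply]

lemma mem_span_pair_iff {q1 q2 : Fin 2 × Fin 2 × Fin 2} (h12 : q1 ≠ q2) (t : T222) :
    t ∈ Submodule.span ℂ {E q1, E q2} ↔ ∀ p, p ≠ q1 → p ≠ q2 → t p = 0 := by
  rw [Submodule.mem_span_pair]
  constructor
  · rintro ⟨a, b, rfl⟩ p h1 h2
    simp [E_apply, h1, h2]
  · intro h
    refine ⟨t q1, t q2, funext fun p => ?_⟩
    by_cases h1 : p = q1
    · subst h1; simp [E_apply, h12]
    · by_cases h2 : p = q2
      · subst h2; simp [E_apply, h12, Ne.symm h12]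
      · simp [E_apply, h1, h2, h p h1 h2]

lemma mem_T_iff (t : T222) : t ∈ T ↔ t (0,1,0) = 0 ∧ t (1,0,1) = 0 := by
  constructor
  · intro ht
    have hle : T ≤ LinearMap.ker (LinearMap.proj (R := ℂ) (φ := fun _ : Fin 2 × Fin 2 × Fin 2 => ℂ) (0,1,0)) ⊓
        LinearMap.ker (LinearMap.proj (R := ℂ) (φ := fun _ : Fin 2 × Fin 2 × Fin 2 => ℂ) (1,0,1)) := by
      rw [T, Submodule.span_le]
      rintro _ ⟨q, ⟨hq1, hq2⟩, rfl⟩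
      constructor <;> simp [LinearMap.mem_ker, LinearMap.proj, E_apply, Ne.symm hq1, Ne.symm hq2]
    exact hle ht
  · rintro ⟨h1, h2⟩
    have hrep : t = ∑ q : Fin 2 × Fin 2 × Fin 2, t q • E q := by
      funext p
      simp [E_apply, Finset.sum_apply]
    rw [hrep]
    refine Submodule.sum_mem _ fun q _ => ?_
    by_cases hq1 : q = (0,1,0)
    · subst hq1; rw [h1, zero_smul]; exact Submodule.zero_mem _
    · by_cases hq2 : q = (1,0,1)
      · subst hq2; rw [h2, zero_smul]; exact Submodule.zero_mem _
      · exact Submodule.smul_mem _ _ (Submodule.subset_span ⟨q, ⟨hq1, hq2⟩, rfl⟩)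

lemma E_ne_zero (q : Fin 2 × Fin 2 × Fin 2) : E q ≠ 0 := by
  intro h
  have := congrFun h q
  simp [E_apply] at this

lemma finrank_span_pair_E {q1 q2 : Fin 2 × Fin 2 × Fin 2} (h : q1 ≠ q2) :
    Module.finrank ℂ ↥(Submodule.span ℂ {E q1, E q2}) = 2 := by
  have hli : LinearIndependent ℂ ![E q1, E q2] := by
    rw [LinearIndependent.pair_iff]
    intro s t hst
    have h1 := congrFun hst q1
    have h2 := congrFun hst q2
    simp [E_apply, h, Ne.symm h] at h1 h2
    exact ⟨h1, h2⟩
  have heq : ({E q1, E q2} : Set T222) = Set.range ![E q1, E q2] := by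
    ext x; simp [Matrix.range_cons, Matrix.range_empty]; tauto
  rw [heq, finrank_span_eq_card hli, Fintype.card_fin]

lemma inf_span_eq_span (a b c d q : Fin 2 × Fin 2 × Fin 2) (hab : a ≠ b) (hcd : c ≠ d)
    (hq1 : q = a ∨ q = b) (hq2 : q = c ∨ q = d)
    (hdis : ∀ p, (p = a ∨ p = b) → (p = c ∨ p = d) → p = q) :
    Submodule.span ℂ {E a, E b} ⊓ Submodule.span ℂ {E c, E d} =
      Submodule.span ℂ {E q} := by
  apply le_antisymm
  · intro t ht
    rw [Submodule.mem_inf] at ht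
    obtain ⟨h1, h2⟩ := ht
    rw [mem_span_pair_iff hab] at h1
    rw [mem_span_pair_iff hcd] at h2
    rw [Submodule.mem_span_singleton]
    refine ⟨t q, funext fun p => ?_⟩
    by_cases hp : p = q
    · subst hp; simp [E_apply]
    · have hor : (p ≠ a ∧ p ≠ b) ∨ (p ≠ c ∧ p ≠ d) := by
        by_cases hpa : p = a ∨ p = b
        · have hnc : ¬(p = c ∨ p = d) := fun h => hp (hdis p hpa h)
          push_neg at hnc
          exact Or.inr hnc
        · push_neg at hpa
          exact Or.inl hpa
      simp only [Pi.smul_apply, E_apply, if_neg hp, smul_eq_mul, mul_zero]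
      rcases hor with ⟨x1, x2⟩ | ⟨x1, x2⟩
      · exact (h1 p x1 x2).symm
      · exact (h2 p x1 x2).symm
  · rw [Submodule.span_le, Set.singleton_subset_iff, SetLike.mem_coe, Submodule.mem_inf]
    constructor
    · rcases hq1 with rfl | rfl <;> exact Submodule.subset_span (by simp)
    · rcases hq2 with rfl | rfl <;> exact Submodule.subset_span (by simp)

lemma inf_span_eq_bot (a b c d : Fin 2 × Fin 2 × Fin 2) (hab : a ≠ b) (hcd : c ≠ d)
    (hdis : ∀ p, (p = a ∨ p = b) → (p = c ∨ p = d) → False) :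
    Submodule.span ℂ {E a, E b} ⊓ Submodule.span ℂ {E c, E d} = (⊥ : Submodule ℂ T222) := by
  rw [eq_bot_iff]
  intro t ht
  rw [Submodule.mem_inf] at ht
  obtain ⟨h1, h2⟩ := ht
  rw [mem_span_pair_iff hab] at h1
  rw [mem_span_pair_iff hcd] at h2
  have ht0 : t = 0 := by
    funext p
    by_cases hpa : p = a ∨ p = b
    · have hnc : ¬(p = c ∨ p = d) := fun h => hdis p hpa h
      push_neg at hnc
      exact h2 p hnc.1 hnc.2
    · push_neg at hpa
      exact h1 p hpa.1 hpa.2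
  simp [ht0]

lemma mem_L_of (u v w : Fin 2 → ℂ) {q1 q2 : Fin 2 × Fin 2 × Fin 2} (h12 : q1 ≠ q2)
    (h : ∀ p, p ≠ q1 → p ≠ q2 → u p.1 * v p.2.1 * w p.2.2 = 0) :
    (fun p : Fin 2 × Fin 2 × Fin 2 => u p.1 * v p.2.1 * w p.2.2) ∈
      Submodule.span ℂ {E q1, E q2} :=
  (mem_span_pair_iff h12 _).mpr h

/-- the finrank-1 intersection, for the six consecutive pairs. -/
lemma finrank_inf_one (a b c d q : Fin 2 × Fin 2 × Fin 2) (hab : a ≠ b) (hcd : c ≠ d)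
    (hq1 : q = a ∨ q = b) (hq2 : q = c ∨ q = d)
    (hdis : ∀ p, (p = a ∨ p = b) → (p = c ∨ p = d) → p = q) :
    Module.finrank ℂ ↥(Submodule.span ℂ {E a, E b} ⊓ Submodule.span ℂ {E c, E d}) = 1 := by
  rw [inf_span_eq_span a b c d q hab hcd hq1 hq2 hdis]
  exact finrank_span_singleton (E_ne_zero q)

def H01 := finrank_inf_one (0,1,1) (1,1,1) (0,0,1) (0,1,1) (0,1,1) (by decide) (by decide) (by decide) (by decide) (by decide)
def H12 := finrank_inf_one (0,0,1) (0,1,1) (0,0,0) (0,0,1) (0,0,1) (by decide) (by decide) (by decide) (by decide) (by decide)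
def H23 := finrank_inf_one (0,0,0) (0,0,1) (0,0,0) (1,0,0) (0,0,0) (by decide) (by decide) (by decide) (by decide) (by decide)
def H34 := finrank_inf_one (0,0,0) (1,0,0) (1,0,0) (1,1,0) (1,0,0) (by decide) (by decide) (by decide) (by decide) (by decide)
def H45 := finrank_inf_one (1,0,0) (1,1,0) (1,1,0) (1,1,1) (1,1,0) (by decide) (by decide) (by decide) (by decide) (by decide)
def H50 := finrank_inf_one (1,1,0) (1,1,1) (0,1,1) (1,1,1) (1,1,1) (by decide) (by decide) (by decide) (by decide) (by decide)
def B02 := inf_span_eq_bot (0,1,1) (1,1,1) (0,0,0) (0,0,1) (by decide) (by decide) (by decide)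
def B03 := inf_span_eq_bot (0,1,1) (1,1,1) (0,0,0) (1,0,0) (by decide) (by decide) (by decide)
def B04 := inf_span_eq_bot (0,1,1) (1,1,1) (1,0,0) (1,1,0) (by decide) (by decide) (by decide)
def B13 := inf_span_eq_bot (0,0,1) (0,1,1) (0,0,0) (1,0,0) (by decide) (by decide) (by decide)
def B14 := inf_span_eq_bot (0,0,1) (0,1,1) (1,0,0) (1,1,0) (by decide) (by decide) (by decide)
def B15 := inf_span_eq_bot (0,0,1) (0,1,1) (1,1,0) (1,1,1) (by decide) (by decide) (by decide)
def B24 := inf_span_eq_bot (0,0,0) (0,0,1) (1,0,0) (1,1,0) (by decide) (by decide) (by decide)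
def B25 := inf_span_eq_bot (0,0,0) (0,0,1) (1,1,0) (1,1,1) (by decide) (by decide) (by decide)
def B35 := inf_span_eq_bot (0,0,0) (1,0,0) (1,1,0) (1,1,1) (by decide) (by decide) (by decide)

set_option maxHeartbeats 1000000 in
theorem stmt7 :
    ({t : T222 | IsRankOne t ∧ t ∈ T} = ⋃ i : Fin 6, (L i : Set T222)) ∧
    (∀ i : Fin 6, Module.finrank ℂ ↥(L i) = 2) ∧
    (∀ i j : Fin 6, i ≠ j →
      ((j = i + 1 ∨ i = j + 1) → Module.finrank ℂ ↥(L i ⊓ L j) = 1) ∧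
      (¬ (j = i + 1 ∨ i = j + 1) → L i ⊓ L j = ⊥)) := by
  refine ⟨?_, ?_, ?_⟩
  · ext t
    simp only [Set.mem_setOf_eq, Set.mem_iUnion, SetLike.mem_coe]
    constructor
    · rintro ⟨⟨u, v, w, rfl⟩, hT⟩
      rw [mem_T_iff] at hT
      obtain ⟨h1, h2⟩ := hT
      simp only at h1 h2
      rcases mul_eq_zero.mp h1 with h1' | hw0
      · rcases mul_eq_zero.mp h1' with hu0 | hv1
        · rcases mul_eq_zero.mp h2 with h2' | hw1
          · rcases mul_eq_zero.mp h2' with hu1 | hv0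
            · exact ⟨0, mem_L_of u v w (by decide) (by
                intro p hp1 hp2; obtain ⟨i,j,k⟩ := p
                fin_cases i <;> fin_cases j <;> fin_cases k <;> simp_all)⟩
            · exact ⟨5, mem_L_of u v w (by decide) (by
                intro p hp1 hp2; obtain ⟨i,j,k⟩ := p
                fin_cases i <;> fin_cases j <;> fin_cases k <;> simp_all)⟩
          · exact ⟨4, mem_L_of u v w (by decide) (by
              intro p hp1 hp2; obtain ⟨i,j,k⟩ := p
              fin_cases i <;> fin_cases j <;> fin_cases k <;> simp_all)⟩
        · rcases mul_eq_zero.mp h2 with h2' | hw1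
          · rcases mul_eq_zero.mp h2' with hu1 | hv0
            · exact ⟨2, mem_L_of u v w (by decide) (by
                intro p hp1 hp2; obtain ⟨i,j,k⟩ := p
                fin_cases i <;> fin_cases j <;> fin_cases k <;> simp_all)⟩
            · exact ⟨0, mem_L_of u v w (by decide) (by
                intro p hp1 hp2; obtain ⟨i,j,k⟩ := p
                fin_cases i <;> fin_cases j <;> fin_cases k <;> simp_all)⟩
          · exact ⟨3, mem_L_of u v w (by decide) (by
              intro p hp1 hp2; obtain ⟨i,j,k⟩ := p
              fin_cases i <;> fin_cases j <;> fin_cases k <;> simp_all)⟩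
      · rcases mul_eq_zero.mp h2 with h2' | hw1
        · rcases mul_eq_zero.mp h2' with hu1 | hv0
          · exact ⟨1, mem_L_of u v w (by decide) (by
              intro p hp1 hp2; obtain ⟨i,j,k⟩ := p
              fin_cases i <;> fin_cases j <;> fin_cases k <;> simp_all)⟩
          · exact ⟨0, mem_L_of u v w (by decide) (by
              intro p hp1 hp2; obtain ⟨i,j,k⟩ := p
              fin_cases i <;> fin_cases j <;> fin_cases k <;> simp_all)⟩
        · exact ⟨0, mem_L_of u v w (by decide) (by
            intro p hp1 hp2; obtain ⟨i,j,k⟩ := p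
            fin_cases i <;> fin_cases j <;> fin_cases k <;> simp_all)⟩
    · rintro ⟨i, hi⟩
      fin_cases i
      · replace hi : t ∈ Submodule.span ℂ {E (0,1,1), E (1,1,1)} := hi
        rw [Submodule.mem_span_pair] at hi
        obtain ⟨a, b, rfl⟩ := hi
        refine ⟨⟨![a,b], ![0,1], ![0,1], ?_⟩, ?_⟩
        · funext p; obtain ⟨i,j,k⟩ := p
          fin_cases i <;> fin_cases j <;> fin_cases k <;> simp [E_apply, Prod.ext_iff]
        · rw [mem_T_iff]; constructor <;> simp [E_apply]
      · replace hi : t ∈ Submodule.span ℂ {E (0,0,1), E (0,1,1)} := hi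
        rw [Submodule.mem_span_pair] at hi
        obtain ⟨a, b, rfl⟩ := hi
        refine ⟨⟨![1,0], ![a,b], ![0,1], ?_⟩, ?_⟩
        · funext p; obtain ⟨i,j,k⟩ := p
          fin_cases i <;> fin_cases j <;> fin_cases k <;> simp [E_apply, Prod.ext_iff]
        · rw [mem_T_iff]; constructor <;> simp [E_apply]
      · replace hi : t ∈ Submodule.span ℂ {E (0,0,0), E (0,0,1)} := hi
        rw [Submodule.mem_span_pair] at hi
        obtain ⟨a, b, rfl⟩ := hi
        refine ⟨⟨![1,0], ![1,0], ![a,b], ?_⟩, ?_⟩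
        · funext p; obtain ⟨i,j,k⟩ := p
          fin_cases i <;> fin_cases j <;> fin_cases k <;> simp [E_apply, Prod.ext_iff]
        · rw [mem_T_iff]; constructor <;> simp [E_apply]
      · replace hi : t ∈ Submodule.span ℂ {E (0,0,0), E (1,0,0)} := hi
        rw [Submodule.mem_span_pair] at hi
        obtain ⟨a, b, rfl⟩ := hi
        refine ⟨⟨![a,b], ![1,0], ![1,0], ?_⟩, ?_⟩
        · funext p; obtain ⟨i,j,k⟩ := p
          fin_cases i <;> fin_cases j <;> fin_cases k <;> simp [E_apply, Prod.ext_iff]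
        · rw [mem_T_iff]; constructor <;> simp [E_apply]
      · replace hi : t ∈ Submodule.span ℂ {E (1,0,0), E (1,1,0)} := hi
        rw [Submodule.mem_span_pair] at hi
        obtain ⟨a, b, rfl⟩ := hi
        refine ⟨⟨![0,1], ![a,b], ![1,0], ?_⟩, ?_⟩
        · funext p; obtain ⟨i,j,k⟩ := p
          fin_cases i <;> fin_cases j <;> fin_cases k <;> simp [E_apply, Prod.ext_iff]
        · rw [mem_T_iff]; constructor <;> simp [E_apply]
      · replace hi : t ∈ Submodule.span ℂ {E (1,1,0), E (1,1,1)} := hi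
        rw [Submodule.mem_span_pair] at hi
        obtain ⟨a, b, rfl⟩ := hi
        refine ⟨⟨![0,1], ![0,1], ![a,b], ?_⟩, ?_⟩
        · funext p; obtain ⟨i,j,k⟩ := p
          fin_cases i <;> fin_cases j <;> fin_cases k <;> simp [E_apply, Prod.ext_iff]
        · rw [mem_T_iff]; constructor <;> simp [E_apply]
  · intro i
    fin_cases i <;> exact finrank_span_pair_E (by decide)
  · intro i j hij
    fin_cases i <;> fin_cases j <;>
      refine ⟨fun hc => ?_, fun hnc => ?_⟩ <;>
      first
        | exact absurd rfl hij
        | exact absurd hc (by decide)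
        | exact absurd (by decide) hnc
        | exact H01 | exact H12 | exact H23 | exact H34 | exact H45 | exact H50
        | exact B02 | exact B03 | exact B04 | exact B13 | exact B14 | exact B15
        | exact B24 | exact B25 | exact B35
        | (rw [inf_comm];
           first
             | exact H01 | exact H12 | exact H23 | exact H34 | exact H45 | exact H50
             | exact B02 | exact B03 | exact B04 | exact B13 | exact B14 | exact B15
             | exact B24 | exact B25 | exact B35)
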